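/- Let μ and ν be finitely supported probability measures on a finite set {y₁ < y₂ < ... < y_M} ⊂ ℝ with equal means, and suppose μ is dominated by ν in convex order (∫f dμ ≤ ∫f dν for every convex f: ℝ → ℝ). Then there exists a probability measure ρ on pairs {y₁,...,y_M} × {y₁,...,y_M} whose first marginal is μ, whose second marginal is ν, and which is a martingale coupling: for every j with μ({y_j}) > 0, ∑_k (y_k - y_j)·ρ({(y_j, y_k)}) = 0. -/

import Mathlib

open Filter Topology

/-- Lemma 4.6 (finite Strassen): convex ordering implies the existence of a
martingale coupling. -/

theorem finite_strassen (M : ℕ) (hM : 1 ≤ M) (y : Fin M → ℝ) (hy : StrictMono y)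
    (μ ν : Fin M → ℝ)
    (hμ : ∀ j, 0 ≤ μ j) (hν : ∀ j, 0 ≤ ν j)
    (hμ1 : ∑ j, μ j = 1) (hν1 : ∑ j, ν j = 1)
    (hmean : ∑ j, μ j * y j = ∑ j, ν j * y j)
    (hcx : ∀ f : ℝ → ℝ, ConvexOn ℝ Set.univ f →
      ∑ j, μ j * f (y j) ≤ ∑ j, ν j * f (y j)) :
    ∃ ρ : Fin M → Fin M → ℝ,
      (∀ j k, 0 ≤ ρ j k) ∧
      (∀ j, ∑ k, ρ j k = μ j) ∧
      (∀ k, ∑ j, ρ j k = ν k) ∧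
      (∀ j, 0 < μ j → ∑ k, (y k - y j) * ρ j k = 0) := by
  classical
  have hne : (Finset.univ : Finset (Fin M)).Nonempty := ⟨⟨0, hM⟩, Finset.mem_univ _⟩
  set A : (Fin M → Fin M → ℝ) → (Fin M → ℝ) × (Fin M → ℝ) × (Fin M → ℝ) := fun ρ =>
    (fun j => ∑ k, ρ j k, fun k => ∑ j, ρ j k, fun j => ∑ k, (y k - y j) * ρ j k)
    with hA
  set C : Set ((Fin M → ℝ) × (Fin M → ℝ) × (Fin M → ℝ)) :=
    {z | ∃ ρ : Fin M → Fin M → ℝ, (∀ j k, 0 ≤ ρ j k) ∧ A ρ = z} with hC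
  set b : (Fin M → ℝ) × (Fin M → ℝ) × (Fin M → ℝ) := (μ, ν, fun _ => 0) with hb
  -- linearity of A on convex/conic combinations
  have hcomb : ∀ (s t : ℝ) (ρ1 ρ2 : Fin M → Fin M → ℝ),
      A (fun j k => s * ρ1 j k + t * ρ2 j k) = s • A ρ1 + t • A ρ2 := by
    intro s t ρ1 ρ2
    refine Prod.ext ?_ (Prod.ext ?_ ?_) <;>
      · simp only [hA, Prod.smul_mk, Prod.mk_add_mk, Prod.fst_add, Prod.snd_add]
        funext i
        simp only [Pi.add_apply, Pi.smul_apply, smul_eq_mul, Finset.mul_sum,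
          ← Finset.sum_add_distrib]
        try exact Finset.sum_congr rfl fun k _ => by ring
  have hAcont : Continuous A := by
    refine Continuous.prodMk ?_ (Continuous.prodMk ?_ ?_)
    · exact continuous_pi fun j => continuous_finset_sum _ fun k _ =>
        (continuous_apply k).comp (continuous_apply j)
    · exact continuous_pi fun k => continuous_finset_sum _ fun j _ =>
        (continuous_apply k).comp (continuous_apply j)
    · exact continuous_pi fun j => continuous_finset_sum _ fun k _ =>
        continuous_const.mul ((continuous_apply k).comp (continuous_apply j))
  -- main step : b is in the closure of C
  have hmain : b ∈ closure C := by
    by_contra hbn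
    have hCconv : Convex ℝ C := by
      rintro z1 ⟨ρ1, hρ1, hz1⟩ z2 ⟨ρ2, hρ2, hz2⟩ s t hs ht hst
      exact ⟨fun j k => s * ρ1 j k + t * ρ2 j k,
        fun j k => add_nonneg (mul_nonneg hs (hρ1 j k)) (mul_nonneg ht (hρ2 j k)),
        by rw [hcomb, hz1, hz2]⟩
    obtain ⟨f, u, hfu, hub⟩ :=
      geometric_hahn_banach_closed_point hCconv.closure isClosed_closure hbn
    have h0C : (0 : (Fin M → ℝ) × (Fin M → ℝ) × (Fin M → ℝ)) ∈ C := by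
      refine ⟨0, fun j k => le_refl 0, ?_⟩
      have := hcomb 0 0 0 0
      simp at this; exact this
    have hupos : 0 < u := by
      have := hfu 0 (subset_closure h0C); simpa using this
    have hf0 : ∀ z ∈ C, f z ≤ 0 := by
      rintro z ⟨ρ, hρ, hzA⟩
      by_contra hpos
      push_neg at hpos
      have hmem : ((u + 1) / f z) • z ∈ C := by
        refine ⟨fun j k => ((u + 1) / f z) * ρ j k,
          fun j k => mul_nonneg (by positivity) (hρ j k), ?_⟩
        have := hcomb ((u + 1) / f z) 0 ρ 0
        simp only [Pi.zero_apply, mul_zero, zero_mul, add_zero, zero_smul] at this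
        rw [this, hzA]
      have hlt := hfu _ (subset_closure hmem)
      rw [map_smul, smul_eq_mul, div_mul_cancel₀ _ (ne_of_gt hpos)] at hlt
      linarith
    -- basis vectors and coefficients
    set e1 : Fin M → (Fin M → ℝ) × (Fin M → ℝ) × (Fin M → ℝ) :=
      fun j => (fun i => if i = j then 1 else 0, 0, 0) with he1
    set e2 : Fin M → (Fin M → ℝ) × (Fin M → ℝ) × (Fin M → ℝ) :=
      fun k => (0, fun i => if i = k then 1 else 0, 0) with he2
    set e3 : Fin M → (Fin M → ℝ) × (Fin M → ℝ) × (Fin M → ℝ) :=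
      fun j => (0, 0, fun i => if i = j then 1 else 0) with he3
    have hdec : ∀ z : (Fin M → ℝ) × (Fin M → ℝ) × (Fin M → ℝ),
        f z = ∑ j, z.1 j * f (e1 j) + ∑ k, z.2.1 k * f (e2 k) + ∑ j, z.2.2 j * f (e3 j) := by
      intro z
      have hz : z = (∑ j, z.1 j • e1 j) + (∑ k, z.2.1 k • e2 k) + (∑ j, z.2.2 j • e3 j) := by
        refine Prod.ext ?_ (Prod.ext ?_ ?_) <;>
          · simp only [he1, he2, he3, Prod.fst_add, Prod.snd_add, Prod.fst_sum, Prod.snd_sum,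
              Prod.smul_mk, smul_zero, Finset.sum_const_zero, add_zero, zero_add]
            funext i
            simp [Finset.sum_apply, Pi.smul_apply, smul_eq_mul, mul_ite, Finset.sum_ite_eq]
      conv_lhs => rw [hz]
      simp [map_add, map_sum, map_smul, smul_eq_mul]
    set a : Fin M → ℝ := fun j => -(f (e1 j)) with ha
    set bb : Fin M → ℝ := fun k => -(f (e2 k)) with hbb
    set c : Fin M → ℝ := fun j => -(f (e3 j)) with hc
    have hcon : ∀ j k, 0 ≤ a j + bb k + (y k - y j) * c j := by
      intro j k
      set δ : Fin M → Fin M → ℝ :=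
        fun j' k' => (if j' = j then 1 else 0) * (if k' = k then 1 else 0) with hδ
      have hδC : A δ ∈ C := ⟨δ, fun j' k' => by positivity, rfl⟩
      have hfδ := hf0 _ hδC
      rw [hdec (A δ)] at hfδ
      have h1 : (A δ).1 = fun j' => if j' = j then (1:ℝ) else 0 := by
        funext j'; simp [hA, hδ, ite_mul, Finset.sum_ite_eq']
      have h2 : (A δ).2.1 = fun k' => if k' = k then (1:ℝ) else 0 := by
        funext k'; simp [hA, hδ, mul_ite, Finset.sum_ite_eq']
      have h3 : (A δ).2.2 = fun j' => if j' = j then (y k - y j') else 0 := by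
        funext j'
        simp only [hA, hδ]
        rw [Finset.sum_eq_single k]
        · by_cases h : j' = j <;> simp [h]
        · intro k' _ hk'; simp [hk']
        · intro h; exact absurd (Finset.mem_univ k) h
      rw [h1, h2, h3] at hfδ
      simp only [ite_mul, one_mul, zero_mul, Finset.sum_ite_eq', Finset.mem_univ,
        if_true] at hfδ
      simp only [ha, hbb, hc]
      linarith
    have hfb : 0 < ∑ j, μ j * f (e1 j) + ∑ k, ν k * f (e2 k) := by
      have hd := hdec b
      rw [hd] at hub
      simp only [hb, zero_mul, Finset.sum_const_zero, add_zero] at hub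
      linarith
    set g : ℝ → ℝ := fun x => Finset.univ.sup' hne (fun j => -a j - c j * (x - y j)) with hg
    have hgconv : ConvexOn ℝ Set.univ g := by
      refine ⟨convex_univ, fun x _ x' _ s t hs ht hst => ?_⟩
      simp only [smul_eq_mul, hg]
      apply Finset.sup'_le
      intro j _
      have h1 : -a j - c j * (x - y j) ≤ Finset.univ.sup' hne
          (fun j => -a j - c j * (x - y j)) :=
        Finset.le_sup' (fun j => -a j - c j * (x - y j)) (Finset.mem_univ j)
      have h2 : -a j - c j * (x' - y j) ≤ Finset.univ.sup' hne
          (fun j => -a j - c j * (x' - y j)) :=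
        Finset.le_sup' (fun j => -a j - c j * (x' - y j)) (Finset.mem_univ j)
      have key : -a j - c j * ((s * x + t * x') - y j)
          = s * (-a j - c j * (x - y j)) + t * (-a j - c j * (x' - y j)) := by
        linear_combination (a j - c j * y j) * hst
      rw [key]
      exact add_le_add (mul_le_mul_of_nonneg_left h1 hs) (mul_le_mul_of_nonneg_left h2 ht)
    have hsum := hcx g hgconv
    have hglb : ∀ j, -a j ≤ g (y j) := by
      intro j
      have := Finset.le_sup' (fun j' => -a j' - c j' * (y j - y j')) (Finset.mem_univ j)
      simp only [sub_self, mul_zero, sub_zero] at this; exact this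
    have hgub : ∀ k, g (y k) ≤ bb k := by
      intro k
      apply Finset.sup'_le
      intro j _
      have := hcon j k
      linarith
    have hL : ∑ j, μ j * (-a j) ≤ ∑ j, μ j * g (y j) :=
      Finset.sum_le_sum fun j _ => mul_le_mul_of_nonneg_left (hglb j) (hμ j)
    have hR : ∑ k, ν k * g (y k) ≤ ∑ k, ν k * bb k :=
      Finset.sum_le_sum fun k _ => mul_le_mul_of_nonneg_left (hgub k) (hν k)
    have hfinal : ∑ j, μ j * (-a j) ≤ ∑ k, ν k * bb k := le_trans hL (le_trans hsum hR)
    have e1' : ∑ j, μ j * (-a j) = ∑ j, μ j * f (e1 j) := by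
      apply Finset.sum_congr rfl; intro j _; simp [ha]
    have e2' : ∑ k, ν k * bb k = -∑ k, ν k * f (e2 k) := by
      rw [← Finset.sum_neg_distrib]
      apply Finset.sum_congr rfl; intro k _; simp [hbb]
    rw [e1', e2'] at hfinal
    linarith
  -- extraction of an exact coupling from the closure
  rw [mem_closure_iff_seq_limit] at hmain
  obtain ⟨z, hzC, hz⟩ := hmain
  choose ρ hρpos hρA using hzC
  have hbd : ∀ᶠ n in atTop, ∀ j : Fin M, (z n).1 j < μ j + 1 := by
    rw [eventually_all]
    intro j
    have h1 : Tendsto (fun n => (z n).1 j) atTop (𝓝 (μ j)) := by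
      have hcont : Continuous fun w : (Fin M → ℝ) × (Fin M → ℝ) × (Fin M → ℝ) => w.1 j :=
        (continuous_apply j).comp continuous_fst
      have := (hcont.tendsto b).comp hz
      simpa [hb, Function.comp_def] using this
    exact h1.eventually (gt_mem_nhds (lt_add_one (μ j)))
  obtain ⟨N, hN⟩ := eventually_atTop.1 hbd
  have hμle : ∀ j, μ j ≤ 1 := by
    intro j
    rw [← hμ1]
    exact Finset.single_le_sum (fun i _ => hμ i) (Finset.mem_univ j)
  have hmem : ∀ n, ρ (n + N) ∈ Set.Icc (0 : Fin M → Fin M → ℝ) (fun _ _ => 2) := by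
    intro n
    constructor
    · intro j k; exact hρpos _ j k
    · intro j k
      have h1 : ρ (n + N) j k ≤ ∑ k', ρ (n + N) j k' :=
        Finset.single_le_sum (fun i _ => hρpos _ j i) (Finset.mem_univ k)
      have h2 : (∑ k', ρ (n + N) j k') = (z (n + N)).1 j := by
        rw [← hρA (n + N)]
      have h3 := hN (n + N) (Nat.le_add_left N n) j
      have h4 := hμle j
      calc ρ (n + N) j k ≤ (z (n + N)).1 j := h2 ▸ h1
        _ ≤ 2 := by linarith
  have hcpt : IsCompact (Set.Icc (0 : Fin M → Fin M → ℝ) (fun _ _ => 2)) := isCompact_Icc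
  obtain ⟨ρ0, hρ0mem, φ, hφ, hlim⟩ := hcpt.tendsto_subseq hmem
  have hAtend : Tendsto (fun n => A (ρ (φ n + N))) atTop (𝓝 (A ρ0)) :=
    (hAcont.tendsto ρ0).comp hlim
  have hφτ : Tendsto (fun n => φ n + N) atTop atTop :=
    tendsto_atTop_mono (fun n => (hφ.id_le n).trans (Nat.le_add_right _ _)) tendsto_id
  have hAρ0 : A ρ0 = b := by
    refine tendsto_nhds_unique hAtend ?_
    have heq : (fun n => A (ρ (φ n + N))) = fun n => z (φ n + N) :=
      funext fun n => hρA _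
    rw [heq]
    exact hz.comp hφτ
  rw [hA, hb, Prod.ext_iff, Prod.ext_iff] at hAρ0
  obtain ⟨h1, h2, h3⟩ := hAρ0
  exact ⟨ρ0, fun j k => hρ0mem.1 j k,
    fun j => congrFun h1 j, fun k => congrFun h2 k,
    fun j _ => congrFun h3 j⟩
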